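/- arXiv:2009.02533 — 7 statements merged into one kernel-verified Lean document; each statement's English description precedes it below -/
import Mathlib

section
/- Let k be a field of characteristic p > 0 and f(x) a monic irreducible polynomial in k[x]. If f(x^{p^n}) is irreducible in k[x] for all n ∈ ℕ, then f ∉ k^p[x], and conversely if f has some coefficient not in k^p = {a^p : a ∈ k}, then f(x^{p^n}) is irreducible for all n. -/
open Polynomial

section Aux

variable {k : Type*} [Field k] (p : ℕ) [Fact p.Prime] [CharP k p]

private lemma aux_hp0 : 0 < p := (Fact.out : p.Prime).pos

/-- If all coefficients of `u` vanish off multiples of `p`, then `u` is an expansion. -/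
private lemma aux_expandable {u : k[X]} (h : ∀ n, ¬ p ∣ n → u.coeff n = 0) :
    ∃ u₁ : k[X], u = expand k p u₁ := by
  have hd : Polynomial.derivative u = 0 := by
    ext n
    rw [coeff_derivative, coeff_zero]
    by_cases hn : p ∣ (n + 1)
    · have h0 : ((n + 1 : ℕ) : k) = 0 := (CharP.cast_eq_zero_iff k p (n + 1)).mpr hn
      push_cast at h0
      rw [h0, mul_zero]
    · rw [h _ hn, zero_mul]
  exact ⟨contract p u, (expand_contract p hd (Fact.out : p.Prime).ne_zero).symm⟩

/-- Coefficients of a `p`-th power vanish off multiples of `p`. -/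
private lemma aux_pow_coeff_zero {N : k[X]} {n : ℕ} (hn : ¬ p ∣ n) : (N ^ p).coeff n = 0 := by
  rw [← map_frobenius_expand, coeff_map, coeff_expand (aux_hp0 p), if_neg hn, map_zero]

/-- If `expand k p f` is a `p`-th power, all coefficients of `f` are `p`-th powers. -/
private lemma aux_pow_coeff {f N : k[X]} (h : expand k p f = N ^ p) :
    ∀ i : ℕ, ∃ a : k, f.coeff i = a ^ p := by
  intro i
  refine ⟨N.coeff i, ?_⟩
  have h2 : (N ^ p : k[X]) = map (frobenius k p) (expand k p N) := (map_frobenius_expand p N).symm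
  have h3 := congrArg (fun q : k[X] => q.coeff (p * i)) (h.trans h2)
  simpa only [coeff_expand_mul' (aux_hp0 p), coeff_map, frobenius_def] using h3

/-- A coprime factor of `expand k p f` is itself an expansion. -/
private lemma aux_claimA {f u v : k[X]} (huv : u * v = expand k p f) (hcop : IsCoprime u v) :
    ∃ u₁ : k[X], u = expand k p u₁ := by
  let K := AlgebraicClosure k
  let φ : k →+* K := algebraMap k K
  haveI : CharP K p := charP_of_injective_ringHom φ.injective p
  have hmap : map φ u * map φ v = expand K p (map φ f) := by
    rw [← Polynomial.map_mul, huv, map_expand]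
  have hpow : expand K p (map φ f) =
      (map ((frobeniusEquiv K p).symm : K →+* K) (map φ f)) ^ p := by
    rw [← map_frobenius_expand p (map ((frobeniusEquiv K p).symm : K →+* K) (map φ f)), map_expand]
    congr 1
    have hcomp : (frobenius K p).comp ((frobeniusEquiv K p).symm : K →+* K) = RingHom.id K := by
      ext a; simp
    rw [Polynomial.map_map, hcomp, Polynomial.map_id]
  have hcopK : IsCoprime (map φ u) (map φ v) := by simpa using hcop.map (mapRingHom φ)
  obtain ⟨d, hd⟩ := exists_associated_pow_of_mul_eq_pow' hcopK (hmap.trans hpow)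
  obtain ⟨c, hc⟩ := hd
  obtain ⟨e, he, hce⟩ := Polynomial.isUnit_iff.mp c.isUnit
  obtain ⟨e', he'⟩ := surjective_frobenius K p e
  have hu : map φ u = (d * C e') ^ p := by
    rw [mul_pow, ← C_pow]
    rw [frobenius_def] at he'
    rw [he', hce, hc]
  refine aux_expandable p (fun n hn => ?_)
  have h0 : (map φ u).coeff n = 0 := by rw [hu]; exact aux_pow_coeff_zero p hn
  rw [coeff_map] at h0
  exact φ.injective (by rwa [map_zero])

end Aux

section Primary

variable {k : Type*} [Field k]

/-- A monic polynomial admitting no nontrivial coprime splitting is a power of a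
monic irreducible. -/
private lemma aux_primary : ∀ N : ℕ, ∀ F : k[X], F.natDegree ≤ N → F.Monic →
    (∀ u v : k[X], u.Monic → v.Monic → IsCoprime u v → u * v = F → u = 1 ∨ v = 1) →
    F = 1 ∨ ∃ (g : k[X]) (m : ℕ), g.Monic ∧ Irreducible g ∧ F = g ^ m := by
  intro N
  induction N with
  | zero =>
    intro F hdeg hF _
    left
    exact hF.natDegree_eq_zero.mp (Nat.le_zero.mp hdeg)
  | succ N ih =>
    intro F hdeg hF hA
    by_cases h1 : F = 1
    · exact Or.inl h1
    right
    have hFu : ¬ IsUnit F := fun h => h1 (hF.eq_one_of_isUnit h)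
    obtain ⟨g, hgm, hgi, F₂, hF₂⟩ := F.exists_monic_irreducible_factor hFu
    have hF₂m : F₂.Monic := hgm.of_mul_monic_left (hF₂ ▸ hF)
    have hgdeg : 0 < g.natDegree := hgi.natDegree_pos
    have hA₂ : ∀ u v : k[X], u.Monic → v.Monic → IsCoprime u v → u * v = F₂ →
        u = 1 ∨ v = 1 := by
      intro u v hu hv hcop huv
      by_cases hgv : g ∣ v
      · left
        have hug : IsCoprime u (g * v) :=
          IsCoprime.mul_right (hcop.of_isCoprime_of_dvd_right hgv) hcop
        have heq : u * (g * v) = F := by rw [hF₂, ← huv]; ring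
        rcases hA u (g * v) hu (hgm.mul hv) hug heq with h | h
        · exact h
        · exact (hgi.not_isUnit (IsUnit.of_mul_eq_one (a := g) v h)).elim
      · right
        have hgvcop : IsCoprime g v := hgi.coprime_iff_not_dvd.mpr hgv
        have heq : (g * u) * v = F := by rw [hF₂, ← huv]; ring
        rcases hA (g * u) v (hgm.mul hu) hv (hgvcop.mul_left hcop) heq with h | h
        · exact (hgi.not_isUnit (IsUnit.of_mul_eq_one (a := g) u h)).elim
        · exact h
    have hdeg₂ : F₂.natDegree ≤ N := by
      have hd : F.natDegree = g.natDegree + F₂.natDegree := by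
        rw [hF₂]; exact hgm.natDegree_mul hF₂m
      omega
    rcases ih F₂ hdeg₂ hF₂m hA₂ with h2 | ⟨g₂, m, hg₂m, hg₂i, hFg₂⟩
    · exact ⟨g, 1, hgm, hgi, by rw [hF₂, h2, mul_one, pow_one]⟩
    rcases Nat.eq_zero_or_pos m with hm0 | hmpos
    · exact ⟨g, 1, hgm, hgi, by rw [hF₂, hFg₂, hm0, pow_zero, mul_one, pow_one]⟩
    have hgeq : g₂ = g := by
      by_contra hne
      have hnd : ¬ g ∣ g₂ := by
        intro hdvd
        exact hne (eq_of_monic_of_associated hg₂m hgm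
          (hgi.associated_of_dvd hg₂i hdvd).symm)
      have hcop : IsCoprime g (g₂ ^ m) := (hgi.coprime_iff_not_dvd.mpr hnd).pow_right
      have heq : g * g₂ ^ m = F := by rw [hF₂, hFg₂]
      rcases hA g (g₂ ^ m) hgm (hg₂m.pow m) hcop heq with h | h
      · exact hgi.not_isUnit (h ▸ isUnit_one)
      · exact hg₂i.not_isUnit ((isUnit_pow_iff hmpos.ne').mp (h ▸ isUnit_one))
    exact ⟨g, m + 1, hgm, hgi, by rw [hF₂, hFg₂, hgeq, pow_succ]; ring⟩

end Primary

section Step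

variable {k : Type*} [Field k] (p : ℕ) [Fact p.Prime] [CharP k p]

/-- Key step: expanding a monic irreducible with a non-`p`-th-power coefficient
stays irreducible. -/
private lemma aux_step {f : k[X]} (hm : f.Monic) (hi : Irreducible f)
    (hbad : ¬ ∀ i : ℕ, ∃ a : k, f.coeff i = a ^ p) :
    Irreducible (expand k p f) := by
  by_contra hred
  apply hbad
  have hFm : (expand k p f).Monic := (monic_expand_iff (aux_hp0 p)).mpr hm
  have hA : ∀ u v : k[X], u.Monic → v.Monic → IsCoprime u v →
      u * v = expand k p f → u = 1 ∨ v = 1 := by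
    intro u v hu hv hcop huv
    obtain ⟨u₁, rfl⟩ := aux_claimA p huv hcop
    obtain ⟨v₁, rfl⟩ := aux_claimA p (show v * _ = _ by rw [← huv]; ring) hcop.symm
    have hf : u₁ * v₁ = f := expand_injective (aux_hp0 p) (by rw [map_mul, huv])
    rcases hi.isUnit_or_isUnit hf.symm with h | h
    · exact Or.inl (by
        rw [((monic_expand_iff (aux_hp0 p)).mp hu).eq_one_of_isUnit h, map_one])
    · exact Or.inr (by
        rw [((monic_expand_iff (aux_hp0 p)).mp hv).eq_one_of_isUnit h, map_one])
  rcases aux_primary (expand k p f).natDegree (expand k p f) le_rfl hFm hA with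
    h1 | ⟨g, m, hgm, hgi, hFg⟩
  · -- expand k p f = 1 is impossible
    have := expand_injective (aux_hp0 p) (h1.trans (map_one (expand k p)).symm)
    exact (hi.not_isUnit (this ▸ isUnit_one)).elim
  by_cases hdg : Polynomial.derivative g = 0
  · -- then g is an expansion, forcing m = 1 and expand k p f irreducible
    have hg : expand k p (contract p g) = g :=
      expand_contract p hdg (Fact.out : p.Prime).ne_zero
    have hf' : f = contract p g ^ m :=
      expand_injective (aux_hp0 p) (by rw [map_pow, hg, ← hFg])
    have hm1 : m = 1 := by
      by_contra hm1
      exact not_irreducible_pow hm1 (hf' ▸ hi)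
    rw [hm1, pow_one] at hFg
    exact (hred (hFg ▸ hgi)).elim
  · -- then p ∣ m, so expand k p f is a p-th power
    have hdF : Polynomial.derivative (expand k p f) = 0 := by
      rw [derivative_expand]
      simp [CharP.cast_eq_zero k[X] p]
    rw [hFg, derivative_pow] at hdF
    have hg0 : g ≠ 0 := hgm.ne_zero
    rcases mul_eq_zero.mp hdF with h | h
    · rcases mul_eq_zero.mp h with h' | h'
      · have hmk : ((m : ℕ) : k) = 0 := by
          have := congrArg (fun q : k[X] => q.coeff 0) h'
          simpa using this
        obtain ⟨m', hm'⟩ := (CharP.cast_eq_zero_iff k p m).mp hmk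
        refine aux_pow_coeff p (N := g ^ m') ?_
        rw [hFg, hm', ← pow_mul, mul_comm]
      · exact (pow_ne_zero _ hg0 h').elim
    · exact (hdg h).elim

end Step

theorem stmt1 {k : Type*} [Field k] (p : ℕ) [Fact p.Prime] [CharP k p]
    (f : Polynomial k) (hmonic : f.Monic) (hirr : Irreducible f) :
    (∀ n : ℕ, Irreducible (f.comp (Polynomial.X ^ p ^ n))) ↔
      ¬ (∀ i : ℕ, ∃ a : k, f.coeff i = a ^ p) := by
  constructor
  · intro hall hco
    choose a ha using hco
    have hg : map (frobenius k p) (∑ i ∈ f.support, C (a i) * X ^ i) = f := by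
      rw [Polynomial.map_sum]
      conv_rhs => rw [f.as_sum_support]
      refine Finset.sum_congr rfl fun i _ => ?_
      rw [Polynomial.map_mul, Polynomial.map_pow, map_C, map_X, frobenius_def, ← ha,
        C_mul_X_pow_eq_monomial]
    set g : k[X] := ∑ i ∈ f.support, C (a i) * X ^ i with hgdef
    have h1 := hall 1
    rw [pow_one] at h1
    have hcomp : f.comp (X ^ p) = g ^ p := by
      rw [← expand_eq_comp_X_pow, ← hg, ← map_expand, map_frobenius_expand]
    rw [hcomp] at h1
    exact not_irreducible_pow (Fact.out : p.Prime).ne_one h1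
  · intro hbad
    have key : ∀ n : ℕ, (expand k (p ^ n) f).Monic ∧ Irreducible (expand k (p ^ n) f) ∧
        ¬ ∀ i : ℕ, ∃ a : k, (expand k (p ^ n) f).coeff i = a ^ p := by
      intro n
      induction n with
      | zero =>
        rw [pow_zero, expand_one]
        exact ⟨hmonic, hirr, hbad⟩
      | succ n ih =>
        obtain ⟨hm, hi, hb⟩ := ih
        have hrw : expand k (p ^ (n + 1)) f = expand k p (expand k (p ^ n) f) := by
          rw [expand_expand, pow_succ, mul_comm]
        rw [hrw]
        refine ⟨(monic_expand_iff (aux_hp0 p)).mpr hm, aux_step p hm hi hb, ?_⟩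
        intro hall
        apply hb
        intro i
        obtain ⟨b, hbb⟩ := hall (p * i)
        exact ⟨b, by rw [← coeff_expand_mul' (aux_hp0 p), hbb]⟩
    intro n
    exact (key n).2.1
end

section
/- Let k be a field of characteristic p > 0, f a monic irreducible polynomial in k[x], and n ∈ ℕ. Then f(x^{p^n}) is either irreducible in k[x] or is a p^{n_0}-th power of an irreducible polynomial in k[x] for some n_0 ∈ ℕ with n_0 ≥ 1. -/
open Polynomial

private lemma monic_eq_of_dvd_of_natDegree_le {k : Type*} [Field k] {f h : Polynomial k}
    (hf : f.Monic) (hh : h.Monic) (hdvd : f ∣ h) (hdeg : h.natDegree ≤ f.natDegree) :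
    h = f := by
  obtain ⟨c, rfl⟩ := hdvd
  have hc0 : c ≠ 0 := by rintro rfl; simp [Monic] at hh
  have hmul := natDegree_mul hf.ne_zero hc0
  have hcdeg : c.natDegree = 0 := by omega
  have hc : c = C (c.coeff 0) := eq_C_of_natDegree_eq_zero hcdeg
  have hlc : (f * c).leadingCoeff = 1 := hh
  rw [leadingCoeff_mul, hf.leadingCoeff, one_mul] at hlc
  rw [hc, leadingCoeff_C] at hlc
  rw [hc, hlc, C_1, mul_one]

private lemma aeval_map_frobenius_pow {k K : Type*} [Field k] [Field K] [Algebra k K]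
    (p : ℕ) [Fact p.Prime] [CharP k p] (g : Polynomial k) (β : K) :
    Polynomial.aeval (β ^ p) (g.map (frobenius k p)) = (Polynomial.aeval β g) ^ p := by
  haveI : CharP K p := charP_of_injective_algebraMap (algebraMap k K).injective p
  have h : (frobenius K p).comp (algebraMap k K) = (algebraMap k K).comp (frobenius k p) := by
    ext c
    simp [frobenius_def, map_pow]
  calc Polynomial.aeval (β ^ p) (g.map (frobenius k p))
      = eval₂ ((algebraMap k K).comp (frobenius k p)) (β ^ p) g := by
        rw [aeval_def, eval₂_map]
    _ = eval₂ ((algebraMap k K).comp (frobenius k p)) (frobenius K p β) g := by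
        rw [frobenius_def]
    _ = frobenius K p (eval₂ (algebraMap k K) β g) := by rw [hom_eval₂, h]
    _ = (Polynomial.aeval β g) ^ p := rfl

private lemma step_lemma {k : Type*} [Field k] (p : ℕ) [Fact p.Prime] [CharP k p] {f : Polynomial k}
    (hmonic : f.Monic) (hirr : Irreducible f) :
    Irreducible (expand k p f) ∨
      ∃ g : Polynomial k, g.Monic ∧ Irreducible g ∧ expand k p f = g ^ p := by
  have hp : p.Prime := Fact.out
  haveI := Fact.mk hirr
  set K := AdjoinRoot f with hK
  set α : K := AdjoinRoot.root f with hα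
  have hf0 : f ≠ 0 := hirr.ne_zero
  haveI : FiniteDimensional k K := PowerBasis.finite (AdjoinRoot.powerBasis hf0)
  have hfrk : Module.finrank k K = f.natDegree := by
    rw [PowerBasis.finrank (AdjoinRoot.powerBasis hf0)]
    rfl
  have hminα : minpoly k α = f := by
    rw [AdjoinRoot.minpoly_root hf0, hmonic.leadingCoeff, inv_one, map_one, mul_one]
  by_cases hcase : ∃ β : K, β ^ p = α
  · obtain ⟨β, hβ⟩ := hcase
    right
    have hint : IsIntegral k β := IsIntegral.of_finite k β
    set g := minpoly k β with hg
    have hgmonic : g.Monic := minpoly.monic hint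
    have hmapeq : g.map (frobenius k p) = f := by
      have h0 : Polynomial.aeval α (g.map (frobenius k p)) = 0 := by
        rw [← hβ, aeval_map_frobenius_pow p, minpoly.aeval, zero_pow hp.ne_zero]
      have hdvd : f ∣ g.map (frobenius k p) := hminα ▸ minpoly.dvd k α h0
      have hdeg : (g.map (frobenius k p)).natDegree ≤ f.natDegree := by
        rw [natDegree_map_eq_of_injective (frobenius k p).injective]
        calc g.natDegree ≤ Module.finrank k K := minpoly.natDegree_le β
          _ = f.natDegree := hfrk
      exact monic_eq_of_dvd_of_natDegree_le hmonic (hgmonic.map _) hdvd hdeg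
    refine ⟨g, hgmonic, minpoly.irreducible hint, ?_⟩
    rw [← hmapeq, ← map_expand, map_frobenius_expand]
  · left
    push_neg at hcase
    have hirr' : Irreducible (X ^ p - C α : Polynomial K) :=
      X_pow_sub_C_irreducible_of_prime hp hcase
    haveI := Fact.mk hirr'
    set q : Polynomial K := X ^ p - C α with hq
    set L := AdjoinRoot q with hL
    set β : L := AdjoinRoot.root q with hβdef
    have hq0 : q ≠ 0 := hirr'.ne_zero
    have hβ : β ^ p = algebraMap K L α := by
      have h1 : eval₂ (AdjoinRoot.of q) (AdjoinRoot.root q) (X ^ p - C α) = 0 :=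
        AdjoinRoot.eval₂_root q
      simp only [eval₂_sub, eval₂_pow, eval₂_X, eval₂_C, sub_eq_zero] at h1
      exact h1
    haveI : FiniteDimensional K L := PowerBasis.finite (AdjoinRoot.powerBasis hq0)
    haveI : FiniteDimensional k L := FiniteDimensional.trans k K L
    have hint : IsIntegral k β := IsIntegral.of_finite k β
    have hqdeg : q.natDegree = p := by
      rw [hq]
      exact natDegree_X_pow_sub_C
    have hfrkL : Module.finrank k L = f.natDegree * p := by
      rw [← Module.finrank_mul_finrank k K L, hfrk,
        PowerBasis.finrank (AdjoinRoot.powerBasis hq0)]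
      congr 1
    have haf : Polynomial.aeval α f = 0 := by
      have := minpoly.aeval k α
      rwa [hminα] at this
    have h0 : Polynomial.aeval β (expand k p f) = 0 := by
      rw [expand_aeval, hβ, aeval_algebraMap_apply, haf, map_zero]
    have hdvd : minpoly k β ∣ expand k p f := minpoly.dvd k β h0
    -- show adjoin k {β} = ⊤
    have hadj : IntermediateField.adjoin k {β} = ⊤ := by
      rw [eq_top_iff]
      intro x hxtop
      clear hxtop
      have hx : x ∈ Algebra.adjoin K {β} := by
        rw [hβdef, AdjoinRoot.adjoinRoot_eq_top]; trivial
      induction hx using Algebra.adjoin_induction with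
      | mem y hy =>
        rw [Set.mem_singleton_iff] at hy
        subst hy
        exact IntermediateField.subset_adjoin k _ rfl
      | algebraMap r =>
        have hα' : (algebraMap K L) α ∈ IntermediateField.adjoin k {β} := by
          rw [← hβ]
          exact pow_mem (IntermediateField.mem_adjoin_simple_self k β) p
        have hr : algebraMap K L r ∈
            (IntermediateField.adjoin k {α}).map (IsScalarTower.toAlgHom k K L) := by
          refine ⟨r, ?_, rfl⟩
          rw [hα, IntermediateField.adjoin_root_eq_top f]
          trivial
        rw [IntermediateField.adjoin_map] at hr
        have : (IsScalarTower.toAlgHom k K L) '' {α} = {(algebraMap K L) α} := by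
          simp
        rw [this] at hr
        exact IntermediateField.adjoin_simple_le_iff.mpr hα' hr
      | add x y _ _ hx hy => exact add_mem hx hy
      | mul x y _ _ hx hy => exact mul_mem hx hy
    have hdegm : (minpoly k β).natDegree = f.natDegree * p := by
      rw [← IntermediateField.adjoin.finrank hint, hadj]
      rw [IntermediateField.finrank_top']
      exact hfrkL
    have heq : expand k p f = minpoly k β := by
      refine monic_eq_of_dvd_of_natDegree_le (minpoly.monic hint)
        (hmonic.expand hp.pos) hdvd ?_
      rw [natDegree_expand, hdegm]
    rw [heq]
    exact minpoly.irreducible hint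

theorem stmt2 {k : Type*} [Field k] (p : ℕ) [Fact p.Prime] [CharP k p]
    (f : Polynomial k) (hmonic : f.Monic) (hirr : Irreducible f) (n : ℕ) :
    Irreducible (f.comp (Polynomial.X ^ p ^ n)) ∨
      ∃ n₀ : ℕ, 1 ≤ n₀ ∧ ∃ g : Polynomial k, Irreducible g ∧
        f.comp (Polynomial.X ^ p ^ n) = g ^ p ^ n₀ := by
  have hp : p.Prime := Fact.out
  have key : ∀ (n : ℕ) (f : Polynomial k), f.Monic → Irreducible f →
      Irreducible (expand k (p ^ n) f) ∨ ∃ n₀ : ℕ, 1 ≤ n₀ ∧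
        ∃ g : Polynomial k, Irreducible g ∧ expand k (p ^ n) f = g ^ p ^ n₀ := by
    intro n
    induction n with
    | zero =>
      intro f hm hi
      left
      simpa using hi
    | succ n ih =>
      intro f hm hi
      have hsplit : expand k (p ^ (n + 1)) f = expand k (p ^ n) (expand k p f) := by
        rw [expand_expand, pow_succ]
      rcases step_lemma p hm hi with h | ⟨g, hgm, hgi, hge⟩
      · rcases ih (expand k p f) (hm.expand hp.pos) h with h' | ⟨n₀, hn₀, g, hgi, hge⟩
        · left; rwa [hsplit]
        · right; exact ⟨n₀, hn₀, g, hgi, by rw [hsplit, hge]⟩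
      · have hsplit2 : expand k (p ^ (n + 1)) f = (expand k (p ^ n) g) ^ p := by
          rw [hsplit, hge, map_pow]
        rcases ih g hgm hgi with h' | ⟨n₀, hn₀, h, hhi, hhe⟩
        · right
          exact ⟨1, le_refl 1, expand k (p ^ n) g, h', by rw [hsplit2, pow_one]⟩
        · right
          refine ⟨n₀ + 1, by omega, h, hhi, ?_⟩
          rw [hsplit2, hhe, ← pow_mul, ← pow_succ]
  have := key n f hmonic hirr
  rwa [expand_eq_comp_X_pow] at this
end

section
/- Let k be a field of characteristic p > 0 and f ∈ k[x] monic irreducible and separable. If f(x^{p^n}) = g(x)^{p^n} for some monic g ∈ k[x] of the same degree as f, then g is separable. -/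
theorem stmt3 {k : Type*} [Field k] (p : ℕ) [Fact p.Prime] [CharP k p]
    (n : ℕ) (f g : Polynomial k) (hmonicf : f.Monic) (hirr : Irreducible f)
    (hsep : f.Separable) (hmonicg : g.Monic) (hdeg : g.natDegree = f.natDegree)
    (h : f.comp (Polynomial.X ^ p ^ n) = g ^ p ^ n) :
    g.Separable := by
  have h1 : Polynomial.map ((frobenius k p) ^ n) (Polynomial.expand k (p ^ n) g) = g ^ p ^ n :=
    iterateFrobenius_eq_pow (R := k) (p := p) (n := n) ▸ Polynomial.map_iterateFrobenius_expand p g n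
  rw [← h, ← Polynomial.expand_eq_comp_X_pow, Polynomial.map_expand] at h1
  have hf : f = g.map ((frobenius k p) ^ n) :=
    (Polynomial.expand_injective (pow_pos (Fact.out (p := p.Prime)).pos n) h1.symm)
  rw [hf, Polynomial.separable_map] at hsep
  exact hsep
end

section
/- Let M(x) = x^{r₁} + a₁x^{r₁-1} + ⋯ + a_{r₁-1}x + μ𝔭_v^{m/r₂} ∈ A[x] be irreducible with root π generating k(π)/k, where A = 𝔽_q[T] and 𝔭_v is monic irreducible. If 𝔭_v does not divide the linear coefficient a_{r₁-1}, then π has a unique zero in k(π) above the place v. -/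
open Polynomial

set_option linter.unusedSectionVars false
section Aux
variable {A k K : Type*} [CommRing A] [IsDomain A] [IsIntegrallyClosed A]
  [Field k] [Field K] [Algebra A k] [IsFractionRing A k]
  [Algebra k K] [Algebra A K] [IsScalarTower A k K]
  [FiniteDimensional k K] [Algebra.IsSeparable k K]
  [Module.Finite A (integralClosure A K)] [Module.Free A (integralClosure A K)]

/-- transfer polynomial identities from `K` to the integral closure -/
lemma aux_aeval_eq (x : integralClosure A K) (p : Polynomial A) :
    ((aeval x p : integralClosure A K) : K) = aeval (x : K) p :=
  (aeval_algHom_apply (Subalgebra.val _) x p).symm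

lemma aux_dvd_coeff_zero (x : integralClosure A K) :
    x ∣ algebraMap A (integralClosure A K) ((minpoly A (x : K)).coeff 0) := by
  have hxint : IsIntegral A (x : K) := x.2
  set p := minpoly A (x : K) with hp
  have h0 : aeval (x : K) p = 0 := minpoly.aeval A (x : K)
  have hsplit : p.divX * X + C (p.coeff 0) = p := p.divX_mul_X_add
  have h1 : aeval (x : K) p.divX * (x : K) + algebraMap A K (p.coeff 0) = 0 := by
    rw [← h0]; conv_rhs => rw [← hsplit]
    simp [aeval_add, aeval_mul, aeval_X, aeval_C]
  refine ⟨-(aeval x p.divX), ?_⟩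
  have : Function.Injective ((Subalgebra.val (integralClosure A K)) : integralClosure A K →ₐ[A] K) :=
    Subtype.val_injective
  apply this
  show ((algebraMap A (integralClosure A K) (p.coeff 0) : integralClosure A K) : K)
      = ((x * -(aeval x p.divX) : integralClosure A K) : K)
  push_cast
  linear_combination h1

end Aux

section Aux2
variable {A k K : Type*} [CommRing A] [IsDomain A] [IsIntegrallyClosed A]
  [Field k] [Field K] [Algebra A k] [IsFractionRing A k]
  [Algebra k K] [Algebra A K] [IsScalarTower A k K]
  [FiniteDimensional k K] [Algebra.IsSeparable k K]
  [Module.Finite A (integralClosure A K)] [Module.Free A (integralClosure A K)]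

open IntermediateField in
lemma aux_norm_formula (x : integralClosure A K) :
    Algebra.norm A x =
      ((-1) ^ (minpoly A (x : K)).natDegree * (minpoly A (x : K)).coeff 0) ^
        (Module.finrank (IntermediateField.adjoin k {(x : K)}) K) := by
  have hxint : IsIntegral A (x : K) := x.2
  have hxk : IsIntegral k (x : K) := hxint.tower_top
  haveI : IsLocalization (Algebra.algebraMapSubmonoid (integralClosure A K)
      (nonZeroDivisors A)) K := IsIntegralClosure.isLocalization A k K _
  have hloc : Algebra.norm k (algebraMap (integralClosure A K) K x)
      = algebraMap A k (Algebra.norm A x) :=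
    Algebra.norm_localization A (nonZeroDivisors A) x
  have hadj : Algebra.norm k (x : K)
      = Algebra.norm k (AdjoinSimple.gen k (x : K)) ^ Module.finrank k⟮(x : K)⟯ K :=
    Algebra.norm_eq_norm_adjoin k (x : K)
  have hmpk : minpoly k (x : K) = (minpoly A (x : K)).map (algebraMap A k) :=
    minpoly.isIntegrallyClosed_eq_field_fractions k K hxint
  set pb := IntermediateField.adjoin.powerBasis hxk with hpb
  have hgen : Algebra.norm k pb.gen
      = (-1) ^ pb.dim * (minpoly k pb.gen).coeff 0 :=
    Algebra.PowerBasis.norm_gen_eq_coeff_zero_minpoly pb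
  have hpbgen : pb.gen = AdjoinSimple.gen k (x : K) := by
    simp [hpb, IntermediateField.adjoin.powerBasis]
  have hmpgen : minpoly k (AdjoinSimple.gen k (x : K)) = minpoly k (x : K) :=
    IntermediateField.minpoly_gen k (x : K)
  have hdim : pb.dim = (minpoly A (x : K)).natDegree := by
    simp [hpb, IntermediateField.adjoin.powerBasis, hmpgen, hmpk,
      (minpoly.monic hxint).natDegree_map]
  apply IsFractionRing.injective A k
  rw [← hloc]
  have hx' : algebraMap (integralClosure A K) K x = (x : K) := rfl
  rw [hx', hadj, ← hpbgen, hgen, hpbgen, hmpgen, hdim, hmpk]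
  push_cast
  rw [coeff_map]

lemma aux_finrank_pos (x : integralClosure A K) :
    0 < Module.finrank (IntermediateField.adjoin k {(x : K)}) K := by
  haveI : FiniteDimensional (IntermediateField.adjoin k {(x : K)}) K :=
    FiniteDimensional.right k _ K
  exact Module.finrank_pos

include k in
lemma aux_dvd_norm (x : integralClosure A K) :
    x ∣ algebraMap A (integralClosure A K) (Algebra.norm A x) := by
  refine (aux_dvd_coeff_zero x).trans (map_dvd _ ?_)
  rw [aux_norm_formula (k := k) x]
  exact (dvd_mul_left _ _).trans (dvd_pow_self _ (aux_finrank_pos (k := k) x).ne')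

end Aux2

set_option maxHeartbeats 2000000
set_option synthInstance.maxHeartbeats 1000000
/-- If `M(x) = x^{r₁} + a₁x^{r₁-1} + ⋯ + a_{r₁-1}x + μ𝔭^{m/r₂}` is irreducible
over `k = 𝔽_q(T)` with root `π` generating `k(π)`, and `𝔭` does not divide the
linear coefficient `a_{r₁-1} = M.coeff 1`, then `π` has a unique zero in `k(π)`
above the place `v` defined by `𝔭` (a unique prime of the integral closure of
`A = 𝔽_q[T]` in `k(π)` lying over `𝔭` and containing `π`). -/
theorem stmt9 {Fq K : Type*} [Field Fq] [Fintype Fq] [Field K]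
    [Algebra (Polynomial Fq) K] [Algebra (RatFunc Fq) K]
    [IsScalarTower (Polynomial Fq) (RatFunc Fq) K]
    (π : integralClosure (Polynomial Fq) K) (hπ0 : (π : K) ≠ 0)
    (hgen : Algebra.adjoin (RatFunc Fq) {(π : K)} = ⊤)
    (𝔭 : Polynomial Fq) (h𝔭 : Irreducible 𝔭) (h𝔭monic : 𝔭.Monic)
    (μ : Fq) (hμ : μ ≠ 0)
    (r r₁ r₂ m : ℕ) (hrfac : r = r₁ * r₂) (hr₁ : 0 < r₁) (hr₂ : 0 < r₂)
    (hm : 0 < m) (hr₂m : r₂ ∣ m)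
    (M : Polynomial (Polynomial Fq)) (hMmonic : M.Monic) (hMdeg : M.natDegree = r₁)
    (hMirr : Irreducible (M.map (algebraMap (Polynomial Fq) (RatFunc Fq))))
    (hMmin : M.map (algebraMap (Polynomial Fq) (RatFunc Fq)) = minpoly (RatFunc Fq) (π : K))
    (hconst : M.coeff 0 = C μ * 𝔭 ^ (m / r₂))
    (hlin : ¬ 𝔭 ∣ M.coeff 1) :
    ∃! P : Ideal (integralClosure (Polynomial Fq) K),
      P.IsPrime ∧ π ∈ P ∧
        P.comap (algebraMap (Polynomial Fq) (integralClosure (Polynomial Fq) K))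
          = Ideal.span {𝔭} := by
  classical
  have hinjAk : Function.Injective (algebraMap (Polynomial Fq) (RatFunc Fq)) :=
    IsFractionRing.injective _ _
  have hπint : IsIntegral (Polynomial Fq) ((π : K)) := π.2
  have hπintk : IsIntegral (RatFunc Fq) (π : K) := hπint.tower_top
  set e := m / r₂ with he_def
  have he : 0 < e := Nat.div_pos (Nat.le_of_dvd hm hr₂m) hr₂
  have hM1ne : M.coeff 1 ≠ 0 := fun h => hlin (h ▸ dvd_zero 𝔭)
  -- separability of the minimal polynomial
  have hsepMk : (M.map (algebraMap (Polynomial Fq) (RatFunc Fq))).Separable := by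
    rw [Polynomial.separable_iff_derivative_ne_zero hMirr]
    intro h
    apply hM1ne
    have h0 := congrArg (fun p => Polynomial.coeff p 0) h
    simp only [Polynomial.coeff_derivative, Polynomial.coeff_map, Polynomial.coeff_zero,
      Nat.cast_zero, zero_add, mul_one] at h0
    exact hinjAk (by simpa using h0)
  have hsepπ : IsSeparable (RatFunc Fq) (π : K) := by
    rw [IsSeparable, ← hMmin]; exact hsepMk
  -- the intermediate field generated by π is everything
  have hIF : IntermediateField.adjoin (RatFunc Fq) {(π : K)} = ⊤ := by
    apply IntermediateField.toSubalgebra_injective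
    rw [IntermediateField.adjoin_simple_toSubalgebra_of_isAlgebraic hπintk.isAlgebraic, hgen,
      IntermediateField.top_toSubalgebra]
  let E : (IntermediateField.adjoin (RatFunc Fq) {(π : K)}) ≃ₐ[RatFunc Fq] K :=
    (IntermediateField.equivOfEq hIF).trans IntermediateField.topEquiv
  haveI hFD : FiniteDimensional (RatFunc Fq) K := by
    haveI : FiniteDimensional (RatFunc Fq) (IntermediateField.adjoin (RatFunc Fq) {(π : K)}) :=
      IntermediateField.adjoin.finiteDimensional hπintk
    exact Module.Finite.equiv E.toLinearEquiv
  haveI hsep : Algebra.IsSeparable (RatFunc Fq) K := by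
    haveI : Algebra.IsSeparable (RatFunc Fq) (IntermediateField.adjoin (RatFunc Fq) {(π : K)}) :=
      (IntermediateField.isSeparable_adjoin_simple_iff_isSeparable _ _).2 hsepπ
    exact Algebra.IsSeparable.of_algHom _ _ E.symm.toAlgHom
  -- instances for the integral closure
  have hinjAK : Function.Injective (algebraMap (Polynomial Fq) K) := by
    rw [IsScalarTower.algebraMap_eq (Polynomial Fq) (RatFunc Fq) K]
    exact (algebraMap (RatFunc Fq) K).injective.comp hinjAk
  have hinjAO : Function.Injective
      (algebraMap (Polynomial Fq) (integralClosure (Polynomial Fq) K)) := by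
    intro a b hab
    apply hinjAK
    rw [IsScalarTower.algebraMap_apply (Polynomial Fq) (integralClosure (Polynomial Fq) K) K,
      IsScalarTower.algebraMap_apply (Polynomial Fq) (integralClosure (Polynomial Fq) K) K, hab]
  haveI : NoZeroSMulDivisors (Polynomial Fq) (integralClosure (Polynomial Fq) K) :=
    by refine ⟨fun {c x} h => ?_⟩
       rw [Algebra.smul_def, mul_eq_zero] at h
       exact h.imp_left (fun h => hinjAO (by rw [h, map_zero]))
  haveI hNoeth : IsNoetherian (Polynomial Fq) (integralClosure (Polynomial Fq) K) :=
    IsIntegralClosure.isNoetherian (Polynomial Fq) (RatFunc Fq) K _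
  haveI : Module.Finite (Polynomial Fq) (integralClosure (Polynomial Fq) K) :=
    Module.finite_def.2 (IsNoetherian.noetherian ⊤)
  haveI : IsDedekindDomain (integralClosure (Polynomial Fq) K) :=
    integralClosure.isDedekindDomain (Polynomial Fq) (RatFunc Fq) K
  -- the algebraic identities satisfied by π
  have haevalM : (Polynomial.aeval (π : K)) M = 0 := by
    rw [← Polynomial.aeval_map_algebraMap (RatFunc Fq), hMmin]; exact minpoly.aeval _ _
  set B := Polynomial.aeval π M.divX with hBdef
  set D := Polynomial.aeval π M.divX.divX with hDdef
  have hkey : (π : integralClosure (Polynomial Fq) K) * B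
      = - algebraMap (Polynomial Fq) (integralClosure (Polynomial Fq) K) (C μ * 𝔭 ^ e) := by
    have h1 : Polynomial.aeval (π : K) M.divX * (π : K)
        + algebraMap (Polynomial Fq) K (M.coeff 0) = 0 := by
      rw [← haevalM]
      conv_rhs => rw [← M.divX_mul_X_add]
      simp
    rw [hconst] at h1
    apply Subtype.val_injective
    push_cast
    rw [hBdef, aux_aeval_eq]
    rw [map_mul (algebraMap (Polynomial Fq) K), map_pow] at h1
    linear_combination h1
  have hB1 : B = D * π
      + algebraMap (Polynomial Fq) (integralClosure (Polynomial Fq) K) (M.coeff 1) := by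
    apply Subtype.val_injective
    push_cast
    rw [hBdef, hDdef, aux_aeval_eq, aux_aeval_eq]
    conv_lhs => rw [← M.divX.divX_mul_X_add]
    simp [Polynomial.coeff_divX]
  have hCμ : IsUnit (Polynomial.C μ : Polynomial Fq) := Polynomial.isUnit_C.2 hμ.isUnit
  -- the norm of π
  have hminA : minpoly (Polynomial Fq) (π : K) = M := by
    have h1 := minpoly.isIntegrallyClosed_eq_field_fractions (RatFunc Fq) K hπint
    simp only [Algebra.algebraMap_self, RingHom.id_apply] at h1
    rw [← hMmin] at h1
    exact Polynomial.map_injective _ hinjAk h1.symm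
  have hfr1 : Module.finrank (IntermediateField.adjoin (RatFunc Fq) {(π : K)}) K = 1 := by
    rw [hIF]; exact IntermediateField.finrank_top
  have hNπ : Algebra.norm (Polynomial Fq) π = (-1) ^ r₁ * (C μ * 𝔭 ^ e) := by
    rw [aux_norm_formula (k := RatFunc Fq) π, hminA, hfr1, pow_one, hMdeg, hconst]
  -- π is not a unit, and 𝔭 lies under any prime containing π
  have hnu : ¬ IsUnit (π : integralClosure (Polynomial Fq) K) := by
    intro h
    have h2 := h.map (Algebra.norm (Polynomial Fq) :
      integralClosure (Polynomial Fq) K →* Polynomial Fq)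
    rw [hNπ] at h2
    have h3 : IsUnit ((C μ : Polynomial Fq) * 𝔭 ^ e) := isUnit_of_mul_isUnit_right h2
    have h4 : IsUnit ((𝔭 : Polynomial Fq) ^ e) := isUnit_of_mul_isUnit_right h3
    exact h𝔭.not_isUnit (isUnit_of_dvd_unit (dvd_pow_self 𝔭 he.ne') h4)
  have hπne : (π : integralClosure (Polynomial Fq) K) ≠ 0 := by
    intro h
    exact hπ0 (by simpa using congrArg Subtype.val h)
  have hspan : Ideal.span {(π : integralClosure (Polynomial Fq) K)} * Ideal.span {B}
      = (Ideal.span {algebraMap (Polynomial Fq) (integralClosure (Polynomial Fq) K) 𝔭}) ^ e := by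
    rw [Ideal.span_singleton_mul_span_singleton, Ideal.span_singleton_pow]
    apply Ideal.span_singleton_eq_span_singleton.2
    have h2 : (π : integralClosure (Polynomial Fq) K) * B
        = (- algebraMap (Polynomial Fq) (integralClosure (Polynomial Fq) K) (C μ))
          * (algebraMap (Polynomial Fq) (integralClosure (Polynomial Fq) K) 𝔭) ^ e := by
      rw [hkey, map_mul, map_pow]; ring
    have hu : IsUnit (- algebraMap (Polynomial Fq) (integralClosure (Polynomial Fq) K) (C μ)) :=
      (hCμ.map (algebraMap (Polynomial Fq) (integralClosure (Polynomial Fq) K))).neg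
    rw [h2]
    exact associated_unit_mul_left _ _ hu
  have key : ∀ P : Ideal (integralClosure (Polynomial Fq) K),
      (P.IsPrime ∧ π ∈ P ∧
        P.comap (algebraMap (Polynomial Fq) (integralClosure (Polynomial Fq) K))
          = Ideal.span {𝔭}) →
      P ^ e ∣ Ideal.span {(π : integralClosure (Polynomial Fq) K)} ∧ P ≠ ⊥ ∧ P.IsMaximal ∧
        Ideal.span {𝔭} ∣ Ideal.relNorm (Polynomial Fq) P := by
    rintro P ⟨hP, hπP, hcomapP⟩
    have hPbot : P ≠ ⊥ := by
      intro h
      exact hπne (by simpa [h, Ideal.mem_bot] using hπP)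
    have hpmem : algebraMap (Polynomial Fq) (integralClosure (Polynomial Fq) K) 𝔭 ∈ P := by
      rw [← Ideal.mem_comap, hcomapP]; exact Ideal.mem_span_singleton_self _
    have hBP : B ∉ P := by
      intro hBP
      apply hlin
      have h3 : algebraMap (Polynomial Fq) (integralClosure (Polynomial Fq) K) (M.coeff 1) ∈ P := by
        have h4 : algebraMap (Polynomial Fq) (integralClosure (Polynomial Fq) K) (M.coeff 1)
            = B - D * π := by rw [hB1]; ring
        rw [h4]; exact Ideal.sub_mem _ hBP (Ideal.mul_mem_left _ _ hπP)
      have h5 : M.coeff 1 ∈ P.comap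
          (algebraMap (Polynomial Fq) (integralClosure (Polynomial Fq) K)) := h3
      rw [hcomapP] at h5
      exact Ideal.mem_span_singleton.1 h5
    have hprime : Prime P := Ideal.prime_of_isPrime hPbot hP
    have hd1 : P ∣ Ideal.span {algebraMap (Polynomial Fq) (integralClosure (Polynomial Fq) K) 𝔭} :=
      Ideal.dvd_iff_le.2 ((Ideal.span_singleton_le_iff_mem _).2 hpmem)
    have hd2 : P ^ e ∣ Ideal.span {(π : integralClosure (Polynomial Fq) K)} * Ideal.span {B} := by
      rw [hspan]; exact pow_dvd_pow_of_dvd hd1 e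
    have hd3 : ¬ P ∣ Ideal.span {B} := fun hd =>
      hBP ((Ideal.span_singleton_le_iff_mem _).1 (Ideal.le_of_dvd hd))
    have hd4 : P ^ e ∣ Ideal.span {(π : integralClosure (Polynomial Fq) K)} := by
      exact Prime.pow_dvd_of_dvd_mul_right (M := Ideal (integralClosure (Polynomial Fq) K)) hprime e hd3 hd2
    refine ⟨hd4, hPbot, hP.isMaximal hPbot, ?_⟩
    rw [Ideal.dvd_iff_le, Ideal.relNorm_apply]
    refine Ideal.span_le.2 ?_
    rintro y ⟨x, hx, rfl⟩
    obtain ⟨c, hc⟩ := aux_dvd_norm (k := RatFunc Fq) x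
    have h5 : algebraMap (Polynomial Fq) (integralClosure (Polynomial Fq) K)
        (Algebra.norm (Polynomial Fq) x) ∈ P := by
      rw [hc]; exact Ideal.mul_mem_right _ _ hx
    have h6 : Algebra.norm (Polynomial Fq) x ∈ P.comap
        (algebraMap (Polynomial Fq) (integralClosure (Polynomial Fq) K)) := h5
    rw [hcomapP] at h6
    simpa [Algebra.intNorm_eq_norm] using h6
  have huniq : ∀ P Q : Ideal (integralClosure (Polynomial Fq) K),
      (P.IsPrime ∧ π ∈ P ∧
        P.comap (algebraMap (Polynomial Fq) (integralClosure (Polynomial Fq) K))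
          = Ideal.span {𝔭}) →
      (Q.IsPrime ∧ π ∈ Q ∧
        Q.comap (algebraMap (Polynomial Fq) (integralClosure (Polynomial Fq) K))
          = Ideal.span {𝔭}) → P = Q := by
    intro P Q hPc hQc
    by_contra hne
    obtain ⟨hPd, hPbot, hPmax, hPn⟩ := key P hPc
    obtain ⟨hQd, hQbot, hQmax, hQn⟩ := key Q hQc
    have hQprime : Prime Q := Ideal.prime_of_isPrime hQbot hQc.1
    obtain ⟨J, hJ⟩ := hPd
    have hQJ : Q ^ e ∣ J := by
      have h9 : ¬ Q ∣ P ^ e := by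
        intro hd
        have h8 : P ≤ Q := Ideal.le_of_dvd (hQprime.dvd_of_dvd_pow hd)
        exact hne (hPmax.eq_of_le hQc.1.ne_top h8)
      have h10 : Q ^ e ∣ P ^ e * J := by rw [← hJ]; exact hQd
      exact Prime.pow_dvd_of_dvd_mul_left (M := Ideal (integralClosure (Polynomial Fq) K)) hQprime e h9 h10
    obtain ⟨J', hJ'⟩ := hQJ
    have hfact : Ideal.span {(π : integralClosure (Polynomial Fq) K)} = P ^ e * Q ^ e * J' := by
      rw [hJ, hJ']; ring
    have hnorm := congrArg (Ideal.relNorm (Polynomial Fq)) hfact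
    rw [Ideal.relNorm_singleton, map_mul, map_mul, map_pow, map_pow] at hnorm
    have hnval : Ideal.span {Algebra.norm (Polynomial Fq) π} = Ideal.span {𝔭} ^ e := by
      rw [Ideal.span_singleton_pow]
      apply Ideal.span_singleton_eq_span_singleton.2
      rw [hNπ]
      have hu1 : IsUnit ((-1 : Polynomial Fq) ^ r₁) := isUnit_one.neg.pow _
      exact (associated_unit_mul_left _ _ hu1).trans (associated_unit_mul_left _ _ hCμ)
    rw [Algebra.intNorm_eq_norm, hnval] at hnorm
    have hdvd2 : (Ideal.span {𝔭} : Ideal (Polynomial Fq)) ^ e * (Ideal.span {𝔭}) ^ e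
        ∣ (Ideal.span {𝔭}) ^ e := by
      conv_rhs => rw [hnorm]
      exact (mul_dvd_mul (pow_dvd_pow_of_dvd hPn e) (pow_dvd_pow_of_dvd hQn e)).mul_right _
    have hne0 : (Ideal.span {𝔭} : Ideal (Polynomial Fq)) ^ e ≠ 0 := by
      apply pow_ne_zero
      rw [Ne, Ideal.zero_eq_bot, Ideal.span_singleton_eq_bot]
      exact h𝔭.ne_zero
    obtain ⟨Y, hY⟩ := hdvd2
    have hone : (1 : Ideal (Polynomial Fq)) = Ideal.span {𝔭} ^ e * Y := by
      apply mul_left_cancel₀ hne0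
      rw [← mul_assoc, ← hY, mul_one]
    have hunit : IsUnit ((Ideal.span {𝔭} : Ideal (Polynomial Fq)) ^ e) :=
      IsUnit.of_mul_eq_one _ hone.symm
    rw [Ideal.isUnit_iff, Ideal.span_singleton_pow, Ideal.span_singleton_eq_top] at hunit
    exact h𝔭.not_isUnit (isUnit_of_dvd_unit (dvd_pow_self 𝔭 he.ne') hunit)
  -- existence
  have hspanne : Ideal.span {(π : integralClosure (Polynomial Fq) K)} ≠ ⊤ := by
    rw [Ne, Ideal.span_singleton_eq_top]; exact hnu
  obtain ⟨P0, hP0max, hP0le⟩ := Ideal.exists_le_maximal _ hspanne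
  have hπP0 : π ∈ P0 := hP0le (Ideal.mem_span_singleton_self _)
  have hpP0 : algebraMap (Polynomial Fq) (integralClosure (Polynomial Fq) K) 𝔭 ∈ P0 := by
    apply hP0max.isPrime.mem_of_pow_mem e
    have h2 : algebraMap (Polynomial Fq) (integralClosure (Polynomial Fq) K) (C μ)
        * (algebraMap (Polynomial Fq) (integralClosure (Polynomial Fq) K) 𝔭) ^ e ∈ P0 := by
      rw [← map_pow, ← map_mul,
        show (algebraMap (Polynomial Fq) (integralClosure (Polynomial Fq) K)) (C μ * 𝔭 ^ e)
          = -(π * B) by rw [hkey]; ring]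
      exact neg_mem (Ideal.mul_mem_right _ _ hπP0)
    obtain ⟨u, hu⟩ := hCμ.map (algebraMap (Polynomial Fq) (integralClosure (Polynomial Fq) K))
    rw [← hu] at h2
    have h3 := P0.mul_mem_left (↑u⁻¹) h2
    rw [← mul_assoc] at h3
    simpa using h3
  have hcomap0 : P0.comap (algebraMap (Polynomial Fq) (integralClosure (Polynomial Fq) K))
      = Ideal.span {𝔭} := by
    have hmax𝔭 : (Ideal.span {𝔭} : Ideal (Polynomial Fq)).IsMaximal :=
      PrincipalIdealRing.isMaximal_of_irreducible h𝔭
    have hle : Ideal.span {𝔭} ≤ P0.comap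
        (algebraMap (Polynomial Fq) (integralClosure (Polynomial Fq) K)) :=
      (Ideal.span_singleton_le_iff_mem _).2 hpP0
    exact (hmax𝔭.eq_of_le (hP0max.isPrime.comap _).ne_top hle).symm
  exact ⟨P0, ⟨hP0max.isPrime, hπP0, hcomap0⟩,
    fun Q hQ => huniq Q P0 hQ ⟨hP0max.isPrime, hπP0, hcomap0⟩⟩
end

section
/- Let L be a finite field and d = gcd(q^k - 1 : k ∈ I) for a nonempty finite set I of positive integers, where q is a prime power. For elements g_k, g_k' ∈ L^* (k ∈ I) suppose there exists x in an extension of L with g_k' = g_k x^{q^k-1} for all k ∈ I, and integers (λ_k) with Σ λ_k(q^k-1) = d such that Π g_k'^{λ_k} = Π g_k^{λ_k} · y^d for some y ∈ L^*. Then g_k' = g_k y^{q^k-1} for all k ∈ I. -/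
lemma zpow_prod_aux {G : Type*} [CommGroup G] (x : G) (s : Finset ℕ) (c : ℕ → ℤ) :
    ∏ k ∈ s, x ^ c k = x ^ (∑ k ∈ s, c k) := by
  induction s using Finset.cons_induction with
  | empty => simp
  | cons a t ha ih => rw [Finset.sum_cons, Finset.prod_cons, zpow_add, ih]

theorem stmt12 {L E : Type*} [Field L] [Fintype L] [Field E] [Algebra L E]
    (q : ℕ) (hq : ∃ p n : ℕ, p.Prime ∧ 0 < n ∧ q = p ^ n)
    (I : Finset ℕ) (hI : I.Nonempty) (hpos : ∀ k ∈ I, 0 < k)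
    (d : ℕ) (hd : d = I.gcd fun k => q ^ k - 1)
    (g g' : ℕ → Lˣ) (x : E)
    (hx : ∀ k ∈ I, algebraMap L E (g' k : L) = algebraMap L E (g k : L) * x ^ (q ^ k - 1))
    (lam : ℕ → ℤ)
    (hlam : ∑ k ∈ I, lam k * ((q : ℤ) ^ k - 1) = (d : ℤ))
    (y : Lˣ)
    (hy : ∏ k ∈ I, g' k ^ lam k = (∏ k ∈ I, g k ^ lam k) * y ^ d) :
    ∀ k ∈ I, g' k = g k * y ^ (q ^ k - 1) := by
  have inj : Function.Injective (algebraMap L E) := (algebraMap L E).injective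
  obtain ⟨p, n, hp, hn, rfl⟩ := hq
  have hq2 : 2 ≤ p ^ n := Nat.one_lt_pow hn.ne' hp.one_lt
  have hqk : ∀ k ∈ I, 1 ≤ (p ^ n) ^ k := fun k hk =>
    Nat.one_le_pow _ _ (by omega)
  have hqk2 : ∀ k ∈ I, 0 < (p ^ n) ^ k - 1 := fun k hk => by
    have h2 : 2 ≤ (p ^ n) ^ k := by
      calc 2 ≤ p ^ n := hq2
      _ = (p ^ n) ^ 1 := (pow_one _).symm
      _ ≤ (p ^ n) ^ k := Nat.pow_le_pow_right (by omega) (hpos k hk)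
    omega
  -- x ≠ 0
  obtain ⟨k0, hk0⟩ := hI
  have hx0 : x ≠ 0 := by
    intro h
    have := hx k0 hk0
    rw [h, zero_pow (hqk2 k0 hk0).ne', mul_zero] at this
    exact (g' k0).ne_zero (inj (by simpa using this))
  set xu : Eˣ := Units.mk0 x hx0 with hxu_def
  set f : Lˣ →* Eˣ := Units.map (algebraMap L E : L →* E) with hf
  have hxu : ∀ k ∈ I, f (g' k) = f (g k) * xu ^ ((p ^ n) ^ k - 1) := by
    intro k hk
    ext
    push_cast [hf, hxu_def]
    exact hx k hk
  -- product relation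
  have hprod : f (∏ k ∈ I, g' k ^ lam k) =
      f (∏ k ∈ I, g k ^ lam k) * xu ^ (d : ℤ) := by
    rw [map_prod, map_prod]
    have : ∀ k ∈ I, f (g' k ^ lam k) =
        f (g k ^ lam k) * xu ^ (lam k * ((p ^ n : ℕ) ^ k - 1 : ℤ)) := by
      intro k hk
      rw [map_zpow, map_zpow, hxu k hk, mul_zpow, ← zpow_natCast xu, ← zpow_mul]
      have : (((p ^ n) ^ k - 1 : ℕ) : ℤ) = ((p ^ n : ℕ) : ℤ) ^ k - 1 := by
        have := hqk k hk
        push_cast [Nat.cast_sub this]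
        ring
      rw [this, mul_comm (lam k)]
    rw [Finset.prod_congr rfl this, Finset.prod_mul_distrib]
    congr 1
    rw [← hlam]
    push_cast
    exact zpow_prod_aux xu I _
  have hxd : xu ^ (d : ℤ) = f (y ^ d) := by
    have := hprod
    rw [hy, map_mul] at this
    have h2 : f (∏ k ∈ I, g k ^ lam k) * f (y ^ d) =
        f (∏ k ∈ I, g k ^ lam k) * xu ^ (d : ℤ) := this
    exact (mul_left_cancel h2).symm
  intro k hk
  have hdvd : d ∣ (p ^ n) ^ k - 1 := hd ▸ Finset.gcd_dvd hk
  obtain ⟨m, hm⟩ := hdvd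
  have hxk : xu ^ ((p ^ n) ^ k - 1) = f (y ^ ((p ^ n) ^ k - 1)) := by
    rw [hm, pow_mul, pow_mul, map_pow, ← zpow_natCast xu, hxd]
  have key : f (g' k) = f (g k * y ^ ((p ^ n) ^ k - 1)) := by
    rw [hxu k hk, hxk, map_mul, map_pow]
  apply Units.ext
  apply inj
  have := congrArg (Units.val) key
  simpa [hf] using this
end

section
/- Let φ and ψ be rank r Drinfeld A-modules over a finite A-field L with φ_T = γ(T) + Σ g_iτ^i and ψ_T = γ(T) + Σ g_i'τ^i. Then φ and ψ are isomorphic over L if and only if they are isomorphic over the separable closure L^{sep} and FI_λ(φ) = FI_λ(ψ) for some (equivalently, all) λ ∈ B, where FI_λ(φ) = Π_{k∈I} g_k^{λ_k} mod L^{*d}, d = gcd(q^k-1 : k ∈ I), I = {i : g_i ≠ 0}, and B is the set of integer tuples (λ_k)_{k∈I} with Σ λ_k(q^k-1) = d. -/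
open scoped Classical

lemma bezout_finset (I : Finset ℕ) (f : ℕ → ℕ) :
    ∃ lam : ℕ → ℤ, ∑ k ∈ I, lam k * (f k : ℤ) = ((I.gcd f : ℕ) : ℤ) := by
  classical
  induction I using Finset.induction with
  | empty => exact ⟨0, by simp⟩
  | @insert a s ha ih =>
    obtain ⟨lam, hlam⟩ := ih
    refine ⟨fun k => if k = a then Nat.gcdA (f a) (s.gcd f)
      else Nat.gcdB (f a) (s.gcd f) * lam k, ?_⟩
    rw [Finset.sum_insert ha, Finset.gcd_insert]
    have h1 : (Nat.gcd (f a) (s.gcd f) : ℤ)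
        = f a * Nat.gcdA (f a) (s.gcd f) + ((s.gcd f : ℕ) : ℤ) * Nat.gcdB (f a) (s.gcd f) :=
      Nat.gcd_eq_gcd_ab _ _
    have h2 : ∑ k ∈ s, (if k = a then Nat.gcdA (f a) (s.gcd f)
        else Nat.gcdB (f a) (s.gcd f) * lam k) * (f k : ℤ)
        = Nat.gcdB (f a) (s.gcd f) * ∑ k ∈ s, lam k * (f k : ℤ) := by
      rw [Finset.mul_sum]
      refine Finset.sum_congr rfl fun k hk => ?_
      rw [if_neg (by rintro rfl; exact ha hk)]; ring
    rw [h2, hlam]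
    have h3 : gcd (f a) (s.gcd f) = Nat.gcd (f a) (s.gcd f) := rfl
    simp only [eq_self_iff_true, if_true, h3, h1]; ring

lemma prod_mul_zpow {F : Type*} [Field F] (I : Finset ℕ) (g : ℕ → F) (x : F) (hx : x ≠ 0)
    (u : ℕ → ℕ) (lam : ℕ → ℤ) :
    ∏ k ∈ I, (g k * x ^ u k) ^ lam k
      = (∏ k ∈ I, g k ^ lam k) * x ^ (∑ k ∈ I, lam k * (u k : ℤ)) := by
  classical
  induction I using Finset.induction with
  | empty => simp
  | @insert a s ha ih =>
    rw [Finset.prod_insert ha, Finset.prod_insert ha, Finset.sum_insert ha, ih, mul_zpow,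
      zpow_add₀ hx, ← zpow_natCast x (u a), ← zpow_mul]
    ring_nf


/-- A rank `r` Drinfeld module over the finite `A`-field `L` is recorded by its
coefficient vector `g : ℕ → L` (with `g k` the coefficient of `τ^k` in `φ_T`,
`g r ≠ 0`).  An isomorphism over a field extension `F` of `L` is an element
`x ∈ F^*` with `g'_k = g_k x^{q^k-1}` for all `k`. -/
theorem stmt13 {L : Type*} [Field L] [Fintype L]
    (q : ℕ) (hq : ∃ p n : ℕ, p.Prime ∧ 0 < n ∧ q = p ^ n)
    (s : ℕ) (hs : 0 < s) (hcard : Fintype.card L = q ^ s)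
    (r : ℕ) (hr : 0 < r)
    (g g' : ℕ → L) (hgr : g r ≠ 0) (hg'r : g' r ≠ 0)
    (I : Finset ℕ) (hI : I = (Finset.Icc 1 r).filter fun i => g i ≠ 0)
    (d : ℕ) (hd : d = I.gcd fun k => q ^ k - 1) :
    ((∃ x : L, x ≠ 0 ∧ ∀ k ∈ Finset.Icc 1 r, g' k = g k * x ^ (q ^ k - 1)) ↔
      ((∃ x : AlgebraicClosure L, x ≠ 0 ∧ ∀ k ∈ Finset.Icc 1 r,
          algebraMap L (AlgebraicClosure L) (g' k)
            = algebraMap L (AlgebraicClosure L) (g k) * x ^ (q ^ k - 1)) ∧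
        ∃ lam : ℕ → ℤ, (∑ k ∈ I, lam k * ((q : ℤ) ^ k - 1)) = (d : ℤ) ∧
          ∃ y : L, y ≠ 0 ∧
            ∏ k ∈ I, g' k ^ lam k = (∏ k ∈ I, g k ^ lam k) * y ^ d))
    ∧
    ((∃ x : L, x ≠ 0 ∧ ∀ k ∈ Finset.Icc 1 r, g' k = g k * x ^ (q ^ k - 1)) ↔
      ((∃ x : AlgebraicClosure L, x ≠ 0 ∧ ∀ k ∈ Finset.Icc 1 r,
          algebraMap L (AlgebraicClosure L) (g' k)
            = algebraMap L (AlgebraicClosure L) (g k) * x ^ (q ^ k - 1)) ∧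
        ∀ lam : ℕ → ℤ, (∑ k ∈ I, lam k * ((q : ℤ) ^ k - 1)) = (d : ℤ) →
          ∃ y : L, y ≠ 0 ∧
            ∏ k ∈ I, g' k ^ lam k = (∏ k ∈ I, g k ^ lam k) * y ^ d)) := by
  obtain ⟨p, n, hp, hn, rfl⟩ := hq
  set q : ℕ := p ^ n with hqdef
  have hq0 : 0 < q := pow_pos hp.pos n
  have hcast : ∀ k : ℕ, ((q ^ k - 1 : ℕ) : ℤ) = (q : ℤ) ^ k - 1 := by
    intro k
    have h1 : 1 ≤ q ^ k := Nat.one_le_pow _ _ hq0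
    rw [Nat.cast_sub h1]; push_cast; ring
  have hsub : I ⊆ Finset.Icc 1 r := by rw [hI]; exact Finset.filter_subset _ _
  have hgI : ∀ k ∈ I, g k ≠ 0 := by
    intro k hk; rw [hI] at hk; exact (Finset.mem_filter.mp hk).2
  set f := algebraMap L (AlgebraicClosure L) with hf
  have hinj : Function.Injective f := f.injective
  -- P → Q
  have fwdQ : (∃ x : L, x ≠ 0 ∧ ∀ k ∈ Finset.Icc 1 r, g' k = g k * x ^ (q ^ k - 1)) →
      (∃ x : AlgebraicClosure L, x ≠ 0 ∧ ∀ k ∈ Finset.Icc 1 r,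
        f (g' k) = f (g k) * x ^ (q ^ k - 1)) := by
    rintro ⟨x, hx, hiso⟩
    refine ⟨f x, fun h => hx (hinj (by simpa using h)), fun k hk => ?_⟩
    rw [hiso k hk, map_mul, map_pow]
  -- P → R∀
  have fwdR : (∃ x : L, x ≠ 0 ∧ ∀ k ∈ Finset.Icc 1 r, g' k = g k * x ^ (q ^ k - 1)) →
      ∀ lam : ℕ → ℤ, (∑ k ∈ I, lam k * ((q : ℤ) ^ k - 1)) = (d : ℤ) →
        ∃ y : L, y ≠ 0 ∧
          ∏ k ∈ I, g' k ^ lam k = (∏ k ∈ I, g k ^ lam k) * y ^ d := by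
    rintro ⟨x, hx, hiso⟩ lam hlam
    refine ⟨x, hx, ?_⟩
    have hsum : ∑ k ∈ I, lam k * ((q ^ k - 1 : ℕ) : ℤ) = (d : ℤ) := by
      rw [← hlam]; exact Finset.sum_congr rfl fun k _ => by rw [hcast]
    calc ∏ k ∈ I, g' k ^ lam k
        = ∏ k ∈ I, (g k * x ^ (q ^ k - 1)) ^ lam k :=
          Finset.prod_congr rfl fun k hk => by rw [hiso k (hsub hk)]
      _ = (∏ k ∈ I, g k ^ lam k) * x ^ (∑ k ∈ I, lam k * ((q ^ k - 1 : ℕ) : ℤ)) :=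
          prod_mul_zpow I g x hx _ lam
      _ = (∏ k ∈ I, g k ^ lam k) * x ^ d := by rw [hsum, zpow_natCast]
  -- Q ∧ R∃ → P
  have bwd : (∃ x : AlgebraicClosure L, x ≠ 0 ∧ ∀ k ∈ Finset.Icc 1 r,
        f (g' k) = f (g k) * x ^ (q ^ k - 1)) →
      (∃ lam : ℕ → ℤ, (∑ k ∈ I, lam k * ((q : ℤ) ^ k - 1)) = (d : ℤ) ∧
        ∃ y : L, y ≠ 0 ∧
          ∏ k ∈ I, g' k ^ lam k = (∏ k ∈ I, g k ^ lam k) * y ^ d) →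
      (∃ x : L, x ≠ 0 ∧ ∀ k ∈ Finset.Icc 1 r, g' k = g k * x ^ (q ^ k - 1)) := by
    rintro ⟨xb, hxb, hiso⟩ ⟨lam, hlam, y, hy, hprod⟩
    have hsum : ∑ k ∈ I, lam k * ((q ^ k - 1 : ℕ) : ℤ) = (d : ℤ) := by
      rw [← hlam]; exact Finset.sum_congr rfl fun k _ => by rw [hcast]
    -- map the product relation to the algebraic closure
    have hmap : ∀ z : ℕ → L, f (∏ k ∈ I, z k ^ lam k) = ∏ k ∈ I, f (z k) ^ lam k := by
      intro z
      rw [map_prod]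
      exact Finset.prod_congr rfl fun k _ => map_zpow₀ f _ _
    have hprod' : ∏ k ∈ I, (f (g k) * xb ^ (q ^ k - 1)) ^ lam k
        = (∏ k ∈ I, f (g k) ^ lam k) * f y ^ d := by
      calc ∏ k ∈ I, (f (g k) * xb ^ (q ^ k - 1)) ^ lam k
          = ∏ k ∈ I, f (g' k) ^ lam k :=
            Finset.prod_congr rfl fun k hk => by rw [hiso k (hsub hk)]
        _ = f (∏ k ∈ I, g' k ^ lam k) := (hmap g').symm
        _ = f ((∏ k ∈ I, g k ^ lam k) * y ^ d) := by rw [hprod]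
        _ = (∏ k ∈ I, f (g k) ^ lam k) * f y ^ d := by rw [map_mul, map_pow, hmap g]
    have hL : ∏ k ∈ I, (f (g k) * xb ^ (q ^ k - 1)) ^ lam k
        = (∏ k ∈ I, f (g k) ^ lam k) * xb ^ (d : ℤ) := by
      rw [prod_mul_zpow I (fun k => f (g k)) xb hxb _ lam, hsum]
    have hne : (∏ k ∈ I, f (g k) ^ lam k) ≠ 0 := by
      rw [Finset.prod_ne_zero_iff]
      intro k hk
      exact zpow_ne_zero _ (by simpa [map_eq_zero] using hgI k hk)
    have hkey : xb ^ d = f y ^ d := by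
      have := mul_left_cancel₀ hne (hL.symm.trans hprod')
      rwa [zpow_natCast] at this
    refine ⟨y, hy, fun k hk => ?_⟩
    by_cases hgk : g k = 0
    · have : f (g' k) = 0 := by rw [hiso k hk, hgk, map_zero, zero_mul]
      have hg'k : g' k = 0 := by rwa [← map_zero f, hinj.eq_iff] at this
      rw [hg'k, hgk, zero_mul]
    · have hkI : k ∈ I := by rw [hI]; exact Finset.mem_filter.mpr ⟨hk, hgk⟩
      have hdvd : d ∣ q ^ k - 1 := hd ▸ Finset.gcd_dvd hkI
      obtain ⟨v, hv⟩ := hdvd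
      have hxby : xb ^ (q ^ k - 1) = f y ^ (q ^ k - 1) := by
        rw [hv, pow_mul, pow_mul, hkey]
      apply hinj
      rw [hiso k hk, map_mul, map_pow, hxby]
  -- Bezout: R∀ → R∃
  have bez : ∃ lam : ℕ → ℤ, (∑ k ∈ I, lam k * ((q : ℤ) ^ k - 1)) = (d : ℤ) := by
    obtain ⟨lam, hlam⟩ := bezout_finset I fun k => q ^ k - 1
    refine ⟨lam, ?_⟩
    rw [← hd] at hlam
    rw [← hlam]
    exact Finset.sum_congr rfl fun k _ => by rw [hcast]
  constructor
  · constructor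
    · intro hP
      obtain ⟨lam, hlam⟩ := bez
      exact ⟨fwdQ hP, lam, hlam, fwdR hP lam hlam⟩
    · rintro ⟨hQ, hR⟩; exact bwd hQ hR
  · constructor
    · intro hP
      exact ⟨fwdQ hP, fwdR hP⟩
    · rintro ⟨hQ, hR⟩
      obtain ⟨lam, hlam⟩ := bez
      exact bwd hQ ⟨lam, hlam, hR lam hlam⟩
end

section
/- Let b₁, b₂ be nonzero elements of A = 𝔽_q[T] with square-free factorizations b₁ = μ₁∏_{i=1}^{n₁} b_{1i}^i and b₂ = μ₂∏_{j=1}^{n₂} b_{2j}^j. Set g₁ = ∏ b_{1i}^{⌊i/2⌋}, g₂ = ∏ b_{2j}^{⌊j/3⌋}, g = gcd(g₁,g₂), c₁ = b₁/g², c₂ = b₂/g³. Then c₁, c₂ ∈ A and there is no nonconstant c ∈ A with c² | c₁ and c³ | c₂ (i.e., x³ + c₁x + c₂ is in standard form). -/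
open Polynomial
open scoped Classical

/-- Helper: multiplicity of a prime in the square-free factorization and in the
floor-power product. -/
lemma stmt17_aux {Fq : Type*} [Field Fq] {p : Polynomial Fq} (hp : Prime p)
    (μ : Fq) (hμ : μ ≠ 0) (n d : ℕ) (u : ℕ → Polynomial Fq)
    (hu : ∀ i ∈ Finset.Icc 1 n, (u i).Monic ∧ Squarefree (u i))
    (hucop : ∀ i ∈ Finset.Icc 1 n, ∀ i' ∈ Finset.Icc 1 n, i ≠ i' →
      IsCoprime (u i) (u i')) :
    ∃ e : ℕ, emultiplicity p (C μ * ∏ i ∈ Finset.Icc 1 n, u i ^ i) = e ∧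
      emultiplicity p (∏ i ∈ Finset.Icc 1 n, u i ^ (i / d)) = ((e / d : ℕ) : ℕ∞) := by
  have hCμ : emultiplicity p (C μ) = 0 := by
    rw [emultiplicity_eq_zero]
    intro h
    exact hp.not_unit (isUnit_of_dvd_unit h (isUnit_C.mpr (Ne.isUnit hμ)))
  by_cases hex : ∃ i ∈ Finset.Icc 1 n, p ∣ u i
  · obtain ⟨i₀, hi₀, hpd⟩ := hex
    have hone : emultiplicity p (u i₀) = 1 := by
      rw [show ((1 : ℕ∞)) = ((1 : ℕ) : ℕ∞) by rfl, emultiplicity_eq_coe]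
      refine ⟨by simpa using hpd, fun h2 => ?_⟩
      exact hp.not_unit ((hu i₀ hi₀).2 p (by simpa [sq] using h2))
    have hzero : ∀ i ∈ Finset.Icc 1 n, i ≠ i₀ → emultiplicity p (u i) = 0 := by
      intro i hi hne
      rw [emultiplicity_eq_zero]
      intro h
      exact hp.not_unit ((hucop i₀ hi₀ i hi (Ne.symm hne)).isUnit_of_dvd' hpd h)
    refine ⟨i₀, ?_, ?_⟩
    · rw [emultiplicity_mul hp, hCμ, zero_add, Finset.emultiplicity_prod hp]
      rw [Finset.sum_eq_single i₀]
      · rw [emultiplicity_pow hp, hone, mul_one]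
      · intro i hi hne
        rw [emultiplicity_pow hp, hzero i hi hne, mul_zero]
      · intro h; exact absurd hi₀ h
    · rw [Finset.emultiplicity_prod hp]
      rw [Finset.sum_eq_single i₀]
      · rw [emultiplicity_pow hp, hone, mul_one]
      · intro i hi hne
        rw [emultiplicity_pow hp, hzero i hi hne, mul_zero]
      · intro h; exact absurd hi₀ h
  · push_neg at hex
    have hzero : ∀ i ∈ Finset.Icc 1 n, emultiplicity p (u i) = 0 := fun i hi =>
      emultiplicity_eq_zero.mpr (hex i hi)
    refine ⟨0, ?_, ?_⟩
    · rw [emultiplicity_mul hp, hCμ, zero_add, Finset.emultiplicity_prod hp]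
      simp only [Nat.cast_zero]
      apply Finset.sum_eq_zero
      intro i hi
      rw [emultiplicity_pow hp, hzero i hi, mul_zero]
    · rw [Finset.emultiplicity_prod hp]
      simp only [Nat.zero_div, Nat.cast_zero]
      apply Finset.sum_eq_zero
      intro i hi
      rw [emultiplicity_pow hp, hzero i hi, mul_zero]

theorem stmt17 {Fq : Type*} [Field Fq] [Fintype Fq]
    (b₁ b₂ : Polynomial Fq) (hb₁ : b₁ ≠ 0) (hb₂ : b₂ ≠ 0)
    (μ₁ μ₂ : Fq) (hμ₁ : μ₁ ≠ 0) (hμ₂ : μ₂ ≠ 0)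
    (n₁ n₂ : ℕ) (u v : ℕ → Polynomial Fq)
    (hu : ∀ i ∈ Finset.Icc 1 n₁, (u i).Monic ∧ Squarefree (u i))
    (hv : ∀ j ∈ Finset.Icc 1 n₂, (v j).Monic ∧ Squarefree (v j))
    (hucop : ∀ i ∈ Finset.Icc 1 n₁, ∀ i' ∈ Finset.Icc 1 n₁, i ≠ i' →
      IsCoprime (u i) (u i'))
    (hvcop : ∀ j ∈ Finset.Icc 1 n₂, ∀ j' ∈ Finset.Icc 1 n₂, j ≠ j' →
      IsCoprime (v j) (v j'))
    (hfac₁ : b₁ = C μ₁ * ∏ i ∈ Finset.Icc 1 n₁, u i ^ i)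
    (hfac₂ : b₂ = C μ₂ * ∏ j ∈ Finset.Icc 1 n₂, v j ^ j)
    (g₁ g₂ g : Polynomial Fq)
    (hg₁ : g₁ = ∏ i ∈ Finset.Icc 1 n₁, u i ^ (i / 2))
    (hg₂ : g₂ = ∏ j ∈ Finset.Icc 1 n₂, v j ^ (j / 3))
    (hg : g = EuclideanDomain.gcd g₁ g₂) :
    ∃ c₁ c₂ : Polynomial Fq, b₁ = g ^ 2 * c₁ ∧ b₂ = g ^ 3 * c₂ ∧
      ∀ c : Polynomial Fq, 1 ≤ c.natDegree → ¬ (c ^ 2 ∣ c₁ ∧ c ^ 3 ∣ c₂) := by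
  -- g₁, g₂ nonzero
  have hg₁0 : g₁ ≠ 0 := by
    rw [hg₁]
    rw [Finset.prod_ne_zero_iff]
    intro i hi
    exact pow_ne_zero _ (hu i hi).1.ne_zero
  have hg₂0 : g₂ ≠ 0 := by
    rw [hg₂]
    rw [Finset.prod_ne_zero_iff]
    intro j hj
    exact pow_ne_zero _ (hv j hj).1.ne_zero
  have hg0 : g ≠ 0 := by
    rw [hg]
    intro h
    exact hg₁0 (EuclideanDomain.gcd_eq_zero_iff.mp h).1
  have hgdvd₁ : g ∣ g₁ := hg ▸ EuclideanDomain.gcd_dvd_left g₁ g₂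
  have hgdvd₂ : g ∣ g₂ := hg ▸ EuclideanDomain.gcd_dvd_right g₁ g₂
  -- g₁ ^ 2 ∣ b₁ and g₂ ^ 3 ∣ b₂
  have hsq : g₁ ^ 2 ∣ b₁ := by
    rw [hg₁, hfac₁, ← Finset.prod_pow]
    apply Dvd.dvd.mul_left
    apply Finset.prod_dvd_prod_of_dvd
    intro i _
    rw [← pow_mul]
    exact pow_dvd_pow (u i) (by omega)
  have hcu : g₂ ^ 3 ∣ b₂ := by
    rw [hg₂, hfac₂, ← Finset.prod_pow]
    apply Dvd.dvd.mul_left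
    apply Finset.prod_dvd_prod_of_dvd
    intro j _
    rw [← pow_mul]
    exact pow_dvd_pow (v j) (by omega)
  obtain ⟨c₁, hc₁⟩ : g ^ 2 ∣ b₁ := dvd_trans (pow_dvd_pow_of_dvd hgdvd₁ 2) hsq
  obtain ⟨c₂, hc₂⟩ : g ^ 3 ∣ b₂ := dvd_trans (pow_dvd_pow_of_dvd hgdvd₂ 3) hcu
  refine ⟨c₁, c₂, hc₁, hc₂, ?_⟩
  rintro c hcdeg ⟨h2, h3⟩
  have hc0 : c ≠ 0 := by rintro rfl; simp at hcdeg
  have hcu' : ¬IsUnit c := fun h => by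
    rw [Polynomial.natDegree_eq_zero_of_isUnit h] at hcdeg; omega
  obtain ⟨p, hpirr, hpc⟩ := WfDvdMonoid.exists_irreducible_factor hcu' hc0
  have hp : Prime p := hpirr.prime
  -- multiplicities
  obtain ⟨e₁, he₁, hge₁⟩ := stmt17_aux hp μ₁ hμ₁ n₁ 2 u hu hucop
  obtain ⟨e₂, he₂, hge₂⟩ := stmt17_aux hp μ₂ hμ₂ n₂ 3 v hv hvcop
  rw [← hfac₁] at he₁
  rw [← hfac₂] at he₂
  rw [← hg₁] at hge₁
  rw [← hg₂] at hge₂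
  have hfin : FiniteMultiplicity p g := FiniteMultiplicity.of_not_isUnit hp.not_unit hg0
  set k := multiplicity p g with hkdef
  have hk : emultiplicity p g = (k : ℕ∞) := hfin.emultiplicity_eq_multiplicity
  -- k ≤ e₁ / 2 and k ≤ e₂ / 3
  have hk1 : k ≤ e₁ / 2 := by
    have := emultiplicity_le_emultiplicity_of_dvd_right (a := p) hgdvd₁
    rw [hk, hge₁] at this
    exact_mod_cast this
  have hk2 : k ≤ e₂ / 3 := by
    have := emultiplicity_le_emultiplicity_of_dvd_right (a := p) hgdvd₂
    rw [hk, hge₂] at this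
    exact_mod_cast this
  -- min ≤ k
  have hmin : min (e₁ / 2) (e₂ / 3) ≤ k := by
    have hd1 : p ^ min (e₁ / 2) (e₂ / 3) ∣ g₁ := by
      apply pow_dvd_of_le_emultiplicity
      rw [hge₁]
      exact_mod_cast min_le_left _ _
    have hd2 : p ^ min (e₁ / 2) (e₂ / 3) ∣ g₂ := by
      apply pow_dvd_of_le_emultiplicity
      rw [hge₂]
      exact_mod_cast min_le_right _ _
    have hdg : p ^ min (e₁ / 2) (e₂ / 3) ∣ g := hg ▸ EuclideanDomain.dvd_gcd hd1 hd2
    have := le_emultiplicity_of_pow_dvd hdg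
    rw [hk] at this
    exact_mod_cast this
  -- e₁ ≥ 2k + 2
  have hp2c₁ : p ^ 2 ∣ c₁ := dvd_trans (pow_dvd_pow_of_dvd hpc 2) h2
  have hp3c₂ : p ^ 3 ∣ c₂ := dvd_trans (pow_dvd_pow_of_dvd hpc 3) h3
  have hle₁ : 2 * k + 2 ≤ e₁ := by
    have : ((2 * k + 2 : ℕ) : ℕ∞) ≤ (e₁ : ℕ∞) := by
      rw [← he₁, hc₁, emultiplicity_mul hp, emultiplicity_pow hp, hk]
      push_cast
      exact add_le_add le_rfl (by exact_mod_cast le_emultiplicity_of_pow_dvd hp2c₁)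
    exact_mod_cast this
  have hle₂ : 3 * k + 3 ≤ e₂ := by
    have : ((3 * k + 3 : ℕ) : ℕ∞) ≤ (e₂ : ℕ∞) := by
      rw [← he₂, hc₂, emultiplicity_mul hp, emultiplicity_pow hp, hk]
      push_cast
      exact add_le_add le_rfl (by exact_mod_cast le_emultiplicity_of_pow_dvd hp3c₂)
    exact_mod_cast this
  omega
end
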